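/- Let N be a 3-connected matroid that has no 4-element fan. Let M be a 3-connected matroid having N as a minor, and let F be a 4-element fan of M. Then |F ∩ E(N)| ≤ 3. -/

import Mathlib

open Matroid Set

namespace ExMinors

variable {α β γ : Type}

/-! ### Basic matroid notions -/

/-- The (extended, `ℕ∞`-valued) rank of a set `X` in a matroid `M`: the supremum of the
cardinalities of independent subsets of `X`. -/
noncomputable def eRank (M : Matroid α) (X : Set α) : ℕ∞ :=
  ⨆ I ∈ {I | M.Indep I ∧ I ⊆ X}, I.encard

/-- `(A, B)` is a 2-separation of `M`: a partition of the ground set into two parts of size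
at least two with `r A + r B ≤ r M + 1`. -/
def TwoSep (M : Matroid α) (A B : Set α) : Prop :=
  A ∪ B = M.E ∧ Disjoint A B ∧ 2 ≤ A.encard ∧ 2 ≤ B.encard ∧
    eRank M A + eRank M B ≤ eRank M M.E + 1

/-- `C` is a circuit of `M` : a minimal dependent set. -/
def IsCircuitM (M : Matroid α) (C : Set α) : Prop :=
  C ⊆ M.E ∧ ¬ M.Indep C ∧ ∀ x ∈ C, M.Indep (C \ {x})

/-- A matroid is connected if it is nonempty and every two distinct elements of the
ground set lie on a common circuit. -/
def ConnectedM (M : Matroid α) : Prop :=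
  M.E.Nonempty ∧ ∀ e ∈ M.E, ∀ f ∈ M.E, e = f ∨ ∃ C, IsCircuitM M C ∧ e ∈ C ∧ f ∈ C

/-- A matroid is 3-connected if it is connected and has no 2-separation. -/
def ThreeConnected (M : Matroid α) : Prop :=
  ConnectedM M ∧ ∀ A B, ¬ TwoSep M A B

/-- A matroid is simple if every subset of the ground set with at most two elements
is independent. -/
def SimpleM (M : Matroid α) : Prop :=
  ∀ e ∈ M.E, ∀ f ∈ M.E, M.Indep {e, f}

def CosimpleM (M : Matroid α) : Prop := SimpleM M✶

/-! ### Minors -/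

/-- Deletion of the set `D` from `M`. -/
def del (M : Matroid α) (D : Set α) : Matroid α := M ↾ (M.E \ D)

/-- Contraction of the set `C` in `M`, defined by duality. -/
def con (M : Matroid α) (C : Set α) : Matroid α := (del M✶ C)✶

/-- `N` is a minor of `M`. -/
def IsMinor (N M : Matroid α) : Prop := ∃ C D : Set α, N = del (con M C) D

/-! ### Isomorphism -/

/-- `φ` is an isomorphism from `M` to `N`: a bijection between the ground sets which
preserves independence. -/
def MIsoVia (M : Matroid α) (N : Matroid β) (φ : α → β) : Prop :=
  Set.BijOn φ M.E N.E ∧ ∀ I ⊆ M.E, (M.Indep I ↔ N.Indep (φ '' I))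

/-- `M` and `N` are isomorphic matroids. -/
def MIso (M : Matroid α) (N : Matroid β) : Prop := ∃ φ, MIsoVia M N φ

/-- `φ` is an automorphism of `M`. -/
def IsAuto (M : Matroid α) (φ : α → α) : Prop := MIsoVia M M φ

/-- `M` has a minor isomorphic to the matroid `N`. -/
def HasMinorIso (M : Matroid α) (N : Matroid β) : Prop :=
  ∃ N' : Matroid α, IsMinor N' M ∧ MIso N' N

/-! ### Representations -/

/-- `M` is the matroid on ground set `range g` (with `g` injective) represented by the
family of column vectors `cols`. -/
def ReppedBy {ι F : Type} [Field F] {n : ℕ} (M : Matroid α) (cols : ι → Fin n → F)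
    (g : ι → α) : Prop :=
  Function.Injective g ∧ M.E = Set.range g ∧
    ∀ J : Set ι, (M.Indep (g '' J) ↔ LinearIndependent F (J.restrict cols))

/-- `M` is isomorphic to the matroid of the `k` columns `cols` over the field `F`. -/
def IsColM {F : Type} [Field F] {k n : ℕ} (cols : Fin k → Fin n → F) (M : Matroid α) : Prop :=
  ∃ g : Fin k → α, ReppedBy M cols g

/-- `M` is representable over the field `F` (by vectors in some finite power of `F`). -/
def RepOver (F : Type) [Field F] (M : Matroid α) : Prop :=
  ∃ (n : ℕ) (v : α → Fin n → F), ∀ I ⊆ M.E, (M.Indep I ↔ LinearIndependent F (I.restrict v))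

/-! ### Named matroids -/

/-- `M` is isomorphic to the uniform matroid `U_{m,n}`. -/
def IsUniform (m n : ℕ) (M : Matroid α) : Prop :=
  M.E.Finite ∧ M.E.ncard = n ∧ ∀ I ⊆ M.E, (M.Indep I ↔ I.ncard ≤ m)

/-- The columns of a `GF(2)`-representation of the Fano matroid `F₇`. -/
def fanoCols : Fin 7 → Fin 3 → ZMod 2 :=
  ![![1,0,0], ![0,1,0], ![0,0,1], ![0,1,1], ![1,0,1], ![1,1,0], ![1,1,1]]

/-- `M` is isomorphic to the Fano matroid `F₇`. -/
def IsF7 (M : Matroid α) : Prop := IsColM fanoCols M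

/-- `M` is isomorphic to `F₇*`. -/
def IsF7dual (M : Matroid α) : Prop := IsF7 M✶

/-- The columns of a `GF(3)`-representation of the non-Fano matroid `F₇⁻`. -/
def nonFanoCols : Fin 7 → Fin 3 → ZMod 3 :=
  ![![1,0,0], ![0,1,0], ![0,0,1], ![0,1,1], ![1,0,1], ![1,1,0], ![1,1,1]]

/-- `M` is isomorphic to the non-Fano matroid `F₇⁻`. -/
def IsNonFano (M : Matroid α) : Prop := IsColM nonFanoCols M

/-- `M` is isomorphic to `(F₇⁻)*`. -/
def IsNonFanoDual (M : Matroid α) : Prop := IsNonFano M✶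

/-- The columns `[I₄ | A₈]` of the `GF(3)`-representation of `P₈`. -/
def p8Cols : Fin 8 → Fin 4 → ZMod 3 :=
  ![![1,0,0,0], ![0,1,0,0], ![0,0,1,0], ![0,0,0,1],
    ![0,1,1,-1], ![1,0,1,1], ![1,1,0,1], ![-1,1,1,0]]

/-- `M` is isomorphic to `P₈`. -/
def IsP8 (M : Matroid α) : Prop := IsColM p8Cols M

/-- `M` is isomorphic to `P₆`: rank 3, six elements, whose only non-spanning circuit is a
single 3-point line. -/
def IsP6 (M : Matroid α) : Prop :=
  M.E.Finite ∧ M.E.ncard = 6 ∧ ∃ T ⊆ M.E, T.ncard = 3 ∧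
    ∀ I ⊆ M.E, (M.Indep I ↔ I.ncard ≤ 3 ∧ I ≠ T)

/-- The columns of a `GF(3)`-representation of `AG(2,3)`: the nine points `(1, x, y)`. -/
def ag23Cols : Fin 9 → Fin 3 → ZMod 3 :=
  fun j => ![1, ((j : ℕ) % 3 : ZMod 3), ((j : ℕ) / 3 : ZMod 3)]

/-- `M` is isomorphic to the ternary affine plane `AG(2,3)`. -/
def IsAG23 (M : Matroid α) : Prop := IsColM ag23Cols M

/-- The columns of a `GF(3)`-representation of `AG(2,3)\e` (one point deleted). -/
def agdeCols : Fin 8 → Fin 3 → ZMod 3 :=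
  fun j => ![1, ((j : ℕ) % 3 : ZMod 3), ((j : ℕ) / 3 : ZMod 3)]

/-- `M` is isomorphic to `AG(2,3)\e`. -/
def IsAGde (M : Matroid α) : Prop := IsColM agdeCols M

/-- `M` is isomorphic to `(AG(2,3)\e)*`. -/
def IsAGdeDual (M : Matroid α) : Prop := IsAGde M✶

/-- The columns `[I₄ | A]` of the `GF(3)`-representation of `Δ₃(AG(2,3)\e)`, where `A` has
rows `(1,0,-1,0), (1,0,1,1), (1,1,0,1), (0,1,1,-1)`. -/
def deltaAGCols : Fin 8 → Fin 4 → ZMod 3 :=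
  ![![1,0,0,0], ![0,1,0,0], ![0,0,1,0], ![0,0,0,1],
    ![1,1,1,0], ![0,0,1,1], ![-1,1,0,1], ![0,1,1,-1]]

/-- `M` is isomorphic to `Δ₃(AG(2,3)\e)`. -/
def IsDeltaAG (M : Matroid α) : Prop := IsColM deltaAGCols M

/-- `X` is a circuit-hyperplane of `M`. -/
def IsCircuitHyperplane (M : Matroid α) (X : Set α) : Prop :=
  IsCircuitM M X ∧ M.IsFlat X ∧ eRank M X + 1 = eRank M M.E

/-- `M` is isomorphic to `P₈⁼`, obtained from `P₈` by relaxing its two disjoint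
circuit-hyperplanes. -/
def IsP8eq (M : Matroid α) : Prop :=
  ∃ (N : Matroid α) (X Y : Set α), IsP8 N ∧ N.E = M.E ∧
    IsCircuitHyperplane N X ∧ IsCircuitHyperplane N Y ∧ Disjoint X Y ∧
    ∀ B ⊆ M.E, (M.IsBase B ↔ (N.IsBase B ∨ B = X ∨ B = Y))

/-- `M` is isomorphic to the Steiner-system matroid `S(5,6,12)`: a rank-6 paving matroid on
12 elements whose circuit-hyperplanes are the blocks of an `S(5,6,12)` Steiner system. -/
def IsSteiner (M : Matroid α) : Prop :=
  ∃ Bl : Set (Set α), M.E.Finite ∧ M.E.ncard = 12 ∧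
    (∀ b ∈ Bl, b ⊆ M.E ∧ b.ncard = 6) ∧
    (∀ s ⊆ M.E, s.ncard = 5 → ∃! b, b ∈ Bl ∧ s ⊆ b) ∧
    (∀ I ⊆ M.E, (M.Indep I ↔ I.ncard ≤ 6 ∧ I ∉ Bl))

/-! ### Excluded-minor classes and superfluous subsets -/

/-- The class of (finite) matroids on `ℕ` having no minor isomorphic to `P i` for `i ∈ S`. -/
def ExClass {k : ℕ} (P : Fin k → Matroid ℕ → Prop) (S : Finset (Fin k)) : Set (Matroid ℕ) :=
  {M | M.E.Finite ∧ ∀ i ∈ S, ¬ ∃ N, IsMinor N M ∧ P i N}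

/-- With `P` listing the excluded minors of a class, the subset `E'` of the excluded minors
is superfluous if `ex(E − E') − ex(E)` contains only finitely many 3-connected matroids up
to isomorphism. -/
def Superfluous {k : ℕ} (P : Fin k → Matroid ℕ → Prop) (E' : Finset (Fin k)) : Prop :=
  ∃ L : List (Matroid ℕ),
    ∀ M ∈ ExClass P (Finset.univ \ E') \ ExClass P Finset.univ,
      ThreeConnected M → ∃ N ∈ L, MIso M N

/-! ### Lines, triangles, triads and fans -/

/-- `L` is a 3-point line of `M`: a rank-2 flat with exactly three elements. -/
def IsLine3 (M : Matroid α) (L : Set α) : Prop :=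
  M.IsFlat L ∧ eRank M L = 2 ∧ L.encard = 3

/-- A triangle is a 3-element circuit. -/
def IsTriangle (M : Matroid α) (T : Set α) : Prop := IsCircuitM M T ∧ T.encard = 3

/-- A triad is a 3-element cocircuit. -/
def IsTriad (M : Matroid α) (T : Set α) : Prop := IsCircuitM M✶ T ∧ T.encard = 3

/-- `(x 1, …, x k)` is a fan of `M`: an ordered sequence of distinct elements of the ground
set such that each three consecutive elements form a triangle or a triad, and triangles and
triads alternate. -/
def IsFan (M : Matroid α) (k : ℕ) (x : ℕ → α) : Prop :=
  3 ≤ k ∧ Set.InjOn x (Set.Icc 1 k) ∧ (∀ i, 1 ≤ i → i ≤ k → x i ∈ M.E) ∧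
  ∀ i, 1 ≤ i → i + 2 ≤ k →
    ((IsTriangle M {x i, x (i+1), x (i+2)} ∨ IsTriad M {x i, x (i+1), x (i+2)}) ∧
      (i + 3 ≤ k →
        (IsTriangle M {x i, x (i+1), x (i+2)} → IsTriad M {x (i+1), x (i+2), x (i+3)}) ∧
        (IsTriad M {x i, x (i+1), x (i+2)} → IsTriangle M {x (i+1), x (i+2), x (i+3)})))

/-! ### Full closure -/

/-- The full closure of `X`: the intersection of all sets containing `X` that are closed in
both `M` and `M✶`. -/
def Fcl (M : Matroid α) (X : Set α) : Set α :=
  ⋂₀ {Y | X ⊆ Y ∧ M.closure Y = Y ∧ M✶.closure Y = Y}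

/-! ### Wheels and generalized parallel connections -/

/-- The columns of the standard `ℚ`-representation of the rank-`n` wheel `W_n`:
spoke `i` is `e_i`, and rim element `i` is `e_i - e_{i+1}` (indices mod `n`). -/
noncomputable def wheelCols (n : ℕ) : Fin n ⊕ Fin n → Fin n → ℚ
  | .inl i => Pi.single i 1
  | .inr i => Pi.single i 1 - Pi.single ⟨((i : ℕ) + 1) % n, Nat.mod_lt _ i.pos⟩ 1

/-- `W` is a copy of the rank-`n` wheel, with spokes `s 1, …, s n` and rim elements
`r 1, …, r n`, so that `{s i, r i, s (i+1)}` is a triangle and `{r i, s (i+1), r (i+1)}` is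
a triad (indices mod `n`). -/
def IsWheel (W : Matroid α) (n : ℕ) (s r : ℕ → α) : Prop :=
  ReppedBy W (wheelCols n)
    (Sum.elim (fun i : Fin n => s ((i : ℕ) + 1)) (fun i : Fin n => r ((i : ℕ) + 1)))

/-- `P` is the generalized parallel connection of `W` and `M` (over the common restriction
`W.E ∩ M.E`, assumed to be a modular flat of `W`), characterized by its flats:
`F` is a flat of `P` iff `F ∩ W.E` is a flat of `W` and `F ∩ M.E` is a flat of `M`. -/
def IsGPC (W M P : Matroid α) : Prop :=
  P.E = W.E ∪ M.E ∧ ∀ F ⊆ P.E, (P.IsFlat F ↔ W.IsFlat (F ∩ W.E) ∧ M.IsFlat (F ∩ M.E))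

/-- `L = Λ_T^n(M)` for the triangle `T = {x₁, x₂, x₃}` of `M` : the generalized parallel
connection of the wheel `W_n` with `M`, where `s 1, r n, s n` of `W_n` are relabelled
`x₁, x₂, x₃`, with `x₂` deleted. -/
def IsLambdaExt (M : Matroid α) (x₁ x₂ x₃ : α) (n : ℕ) (L : Matroid α) : Prop :=
  ∃ (W P : Matroid α) (s r : ℕ → α), IsWheel W n s r ∧
    s 1 = x₁ ∧ r n = x₂ ∧ s n = x₃ ∧ W.E ∩ M.E = {x₁, x₂, x₃} ∧
    IsGPC W M P ∧ L = del P {x₂}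

/-- `D = Δ_T(M)`, the `Δ-Y` exchange of `M` on the coindependent triangle
`T = {x₁, x₂, x₃}`: the generalized parallel connection of `M(K₄) = W₃` with `M` across
`T`, with `T` deleted. -/
def IsDeltaY (M : Matroid α) (x₁ x₂ x₃ : α) (D : Matroid α) : Prop :=
  ∃ (W P : Matroid α) (s r : ℕ → α), IsWheel W 3 s r ∧
    s 1 = x₁ ∧ r 3 = x₂ ∧ s 3 = x₃ ∧ W.E ∩ M.E = {x₁, x₂, x₃} ∧
    IsGPC W M P ∧ D = del P {x₁, x₂, x₃}

/-- The columns `[I₃ | A]` of the `GF(3)`-representation of the matroid `M₈`, where `A` has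
rows `(1,1,0,1,0), (1,0,1,1,1), (0,1,1,1,-1)`. -/
def m8Cols : Fin 8 → Fin 3 → ZMod 3 :=
  ![![1,0,0], ![0,1,0], ![0,0,1], ![1,1,0], ![1,0,1], ![0,1,1], ![1,1,1], ![0,1,-1]]



/-! ### Auxiliary lemmas -/

lemma indep_of_con {M : Matroid α} {C I : Set α} (h : (con M C).Indep I) : M.Indep I := by
  unfold con del at h
  rw [Matroid.dual_indep_iff_exists'] at h
  obtain ⟨hIE, B, hB, hdisj⟩ := h
  rw [Matroid.isBase_restrict_iff'] at hB
  rw [restrict_ground_eq] at hIE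
  obtain ⟨B', hB', hBB'⟩ := hB.indep.exists_isBase_superset
  have hIB' : ∀ x ∈ I, x ∉ B' := by
    intro x hx hxB'
    by_cases hxB : x ∈ B
    · exact (hdisj.ne_of_mem hx hxB) rfl
    · exact hB.insert_not_indep ⟨hIE hx, hxB⟩
        (hB'.indep.subset (insert_subset hxB' hBB'))
  exact (hB'.compl_isBase_of_dual).indep.subset fun x hx => ⟨(hIE hx).1, hIB' x hx⟩

lemma indep_of_minor {N M : Matroid α} (h : IsMinor N M) {I : Set α}
    (hI : N.Indep I) : M.Indep I := by
  obtain ⟨C, D, rfl⟩ := h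
  exact indep_of_con (restrict_indep_iff.1 hI).1

lemma dual_indep_of_minor {N M : Matroid α} (h : IsMinor N M) {I : Set α}
    (hI : N✶.Indep I) : M✶.Indep I := by
  obtain ⟨C, D, rfl⟩ := h
  have hd : (del (con M C) D)✶ = con (del M✶ C) D := by
    unfold con
    rfl
  rw [hd] at hI
  exact (restrict_indep_iff.1 (indep_of_con hI)).1

lemma encard_le_eRank {M : Matroid α} {I X : Set α} (hI : M.Indep I) (hIX : I ⊆ X) :
    I.encard ≤ eRank M X :=
  le_biSup _ (show I ∈ {I | M.Indep I ∧ I ⊆ X} from ⟨hI, hIX⟩)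

lemma eRank_le {M : Matroid α} {X : Set α} {c : ℕ∞}
    (h : ∀ I, M.Indep I → I ⊆ X → I.encard ≤ c) : eRank M X ≤ c :=
  iSup₂_le fun I hI => h I hI.1 hI.2

lemma eRank_mono (M : Matroid α) {X Y : Set α} (hXY : X ⊆ Y) : eRank M X ≤ eRank M Y :=
  eRank_le fun _ h1 h2 => encard_le_eRank h1 (h2.trans hXY)

lemma two_le_diff_encard {E A : Set α} (h4 : 4 ≤ E.encard) (hA : A ⊆ E)
    (hA2 : A.encard = 2) : 2 ≤ (E \ A).encard := by
  have h := encard_diff_add_encard_of_subset hA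
  rw [hA2] at h
  by_contra hlt
  push_neg at hlt
  have h1 : (E \ A).encard + 2 ≤ 1 + 2 := by
    have : (E \ A).encard ≤ 1 := Order.le_of_lt_add_one (by exact_mod_cast hlt)
    exact add_le_add_left this 2
  rw [h] at h1
  exact absurd (h4.trans h1) (by norm_num)

lemma pair_indep {N : Matroid α} (h3 : ThreeConnected N) (h4 : 4 ≤ N.E.encard)
    {e f : α} (he : e ∈ N.E) (hf : f ∈ N.E) (hef : e ≠ f) : N.Indep {e, f} := by
  by_contra hdep
  have hAE : ({e, f} : Set α) ⊆ N.E := by simp [he, hf, insert_subset_iff]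
  refine h3.2 {e, f} (N.E \ {e, f}) ⟨union_diff_cancel hAE, disjoint_sdiff_right,
    (encard_pair hef).ge, two_le_diff_encard h4 hAE (encard_pair hef), ?_⟩
  have hA : eRank N {e, f} ≤ 1 := by
    refine eRank_le fun I hI hIX => ?_
    by_cases heI : e ∈ I
    · by_cases hfI : f ∈ I
      · exact absurd (hIX.antisymm (insert_subset heI (singleton_subset_iff.2 hfI)) ▸ hI) hdep
      · refine (encard_le_encard (fun x hx => ?_)).trans_eq (encard_singleton e)
        rcases mem_insert_iff.1 (hIX hx) with h | h
        · exact h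
        · exact absurd ((mem_singleton_iff.1 h) ▸ hx) hfI
    · refine (encard_le_encard (fun x hx => ?_)).trans_eq (encard_singleton f)
      rcases mem_insert_iff.1 (hIX hx) with h | h
      · exact absurd (h ▸ hx) heI
      · exact h
  calc eRank N {e, f} + eRank N (N.E \ {e, f}) ≤ 1 + eRank N N.E :=
        add_le_add hA (eRank_mono N diff_subset)
    _ = eRank N N.E + 1 := add_comm _ _

lemma pair_coindep {N : Matroid α} (h3 : ThreeConnected N) (h4 : 4 ≤ N.E.encard)
    {e f : α} (he : e ∈ N.E) (hf : f ∈ N.E) (hef : e ≠ f) : N✶.Indep {e, f} := by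
  by_contra hdep
  have hAE : ({e, f} : Set α) ⊆ N.E := by simp [he, hf, insert_subset_iff]
  have key : ∀ I, N.Indep I → I ⊆ N.E \ {e, f} → I.encard + 1 ≤ eRank N N.E := by
    intro I hI hIB
    have hnb : ¬ N.IsBase I := by
      intro hb
      exact hdep (dual_indep_iff_exists'.mpr ⟨hAE, I, hb,
        disjoint_sdiff_right.mono_right hIB⟩)
    obtain ⟨B0, hB0⟩ := N.exists_isBase
    obtain ⟨x, hx, hxI⟩ := hI.exists_insert_of_not_isBase hnb hB0
    rw [← encard_insert_of_notMem hx.2]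
    exact encard_le_eRank hxI (insert_subset (hB0.subset_ground hx.1)
      (fun z hz => (hIB hz).1))
  have h1E : (1 : ℕ∞) ≤ eRank N N.E := by
    have h0 := key ∅ N.empty_indep (empty_subset _)
    rwa [encard_empty, zero_add] at h0
  have hB : eRank N (N.E \ {e, f}) ≤ eRank N N.E - 1 :=
    eRank_le fun I hI hIX =>
      (ENat.addLECancellable_of_ne_top (by norm_num)).le_tsub_of_add_le_right (key I hI hIX)
  have hA : eRank N {e, f} ≤ 2 :=
    eRank_le fun I hI hIX => (encard_le_encard hIX).trans_eq (encard_pair hef)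
  refine h3.2 {e, f} (N.E \ {e, f}) ⟨union_diff_cancel hAE, disjoint_sdiff_right,
    (encard_pair hef).ge, two_le_diff_encard h4 hAE (encard_pair hef), ?_⟩
  calc eRank N {e, f} + eRank N (N.E \ {e, f}) ≤ 2 + (eRank N N.E - 1) :=
        add_le_add hA hB
    _ = (eRank N N.E - 1) + 2 := add_comm _ _
    _ = eRank N N.E + 1 := by
        rw [show (2 : ℕ∞) = 1 + 1 by norm_num, ← add_assoc, tsub_add_cancel_of_le h1E]

lemma encard3_le (a b c : α) : ({a, b, c} : Set α).encard ≤ 3 :=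
  calc ({a, b, c} : Set α).encard ≤ ({b, c} : Set α).encard + 1 := encard_insert_le _ _
    _ ≤ (({c} : Set α).encard + 1) + 1 := add_le_add_left (encard_insert_le _ _) _
    _ ≤ 3 := by rw [encard_singleton]; norm_num

lemma triple_encard {a b c : α} (hab : a ≠ b) (hac : a ≠ c) (hbc : b ≠ c) :
    ({a, b, c} : Set α).encard = 3 := by
  rw [encard_insert_of_notMem (by simp [hab, hac]), encard_pair hbc]
  norm_num

lemma triangle_minor {N M : Matroid α} (hNM : IsMinor N M) (h3 : ThreeConnected N)
    (h4 : 4 ≤ N.E.encard) {a b c : α} (hT : IsTriangle M {a, b, c})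
    (ha : a ∈ N.E) (hb : b ∈ N.E) (hc : c ∈ N.E)
    (hab : a ≠ b) (hac : a ≠ c) (hbc : b ≠ c) : IsTriangle N {a, b, c} := by
  refine ⟨⟨by simp [insert_subset_iff, ha, hb, hc], ?_, ?_⟩, triple_encard hab hac hbc⟩
  · intro hind
    exact hT.1.2.1 (indep_of_minor hNM hind)
  · intro x hx
    simp only [mem_insert_iff, mem_singleton_iff] at hx
    rcases hx with rfl | rfl | rfl
    · exact (pair_indep h3 h4 hb hc hbc).subset (by
        intro z hz
        simp only [mem_diff, mem_insert_iff, mem_singleton_iff] at hz ⊢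
        tauto)
    · exact (pair_indep h3 h4 ha hc hac).subset (by
        intro z hz
        simp only [mem_diff, mem_insert_iff, mem_singleton_iff] at hz ⊢
        tauto)
    · exact (pair_indep h3 h4 ha hb hab).subset (by
        intro z hz
        simp only [mem_diff, mem_insert_iff, mem_singleton_iff] at hz ⊢
        tauto)

lemma triad_minor {N M : Matroid α} (hNM : IsMinor N M) (h3 : ThreeConnected N)
    (h4 : 4 ≤ N.E.encard) {a b c : α} (hT : IsTriad M {a, b, c})
    (ha : a ∈ N.E) (hb : b ∈ N.E) (hc : c ∈ N.E)
    (hab : a ≠ b) (hac : a ≠ c) (hbc : b ≠ c) : IsTriad N {a, b, c} := by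
  refine ⟨⟨by rw [dual_ground]; simp [insert_subset_iff, ha, hb, hc], ?_, ?_⟩,
    triple_encard hab hac hbc⟩
  · intro hind
    exact hT.1.2.1 (dual_indep_of_minor hNM hind)
  · intro x hx
    simp only [mem_insert_iff, mem_singleton_iff] at hx
    rcases hx with rfl | rfl | rfl
    · exact (pair_coindep h3 h4 hb hc hbc).subset (by
        intro z hz
        simp only [mem_diff, mem_insert_iff, mem_singleton_iff] at hz ⊢
        tauto)
    · exact (pair_coindep h3 h4 ha hc hac).subset (by
        intro z hz
        simp only [mem_diff, mem_insert_iff, mem_singleton_iff] at hz ⊢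
        tauto)
    · exact (pair_coindep h3 h4 ha hb hab).subset (by
        intro z hz
        simp only [mem_diff, mem_insert_iff, mem_singleton_iff] at hz ⊢
        tauto)

/-- An explicit 4-term sequence. -/
def seq4 (a b c d : α) : ℕ → α := fun i => if i = 1 then a else if i = 2 then b
  else if i = 3 then c else d

set_option maxHeartbeats 1000000 in
lemma build_fan {N : Matroid α} {a b c d : α}
    (hab : a ≠ b) (hac : a ≠ c) (had : a ≠ d) (hbc : b ≠ c) (hbd : b ≠ d) (hcd : c ≠ d)
    (ha : a ∈ N.E) (hb : b ∈ N.E) (hc : c ∈ N.E) (hd : d ∈ N.E)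
    (hT1 : IsTriangle N {a, b, c} ∨ IsTriad N {a, b, c})
    (hT2 : IsTriangle N {b, c, d} ∨ IsTriad N {b, c, d})
    (imp1 : IsTriangle N {a, b, c} → IsTriad N {b, c, d})
    (imp2 : IsTriad N {a, b, c} → IsTriangle N {b, c, d}) : ∃ z, IsFan N 4 z := by
  refine ⟨seq4 a b c d, by norm_num, ?_, ?_, ?_⟩
  · intro i hi j hj h
    simp only [mem_Icc] at hi hj
    obtain ⟨hi1, hi4⟩ := hi
    obtain ⟨hj1, hj4⟩ := hj
    interval_cases i <;> interval_cases j <;> simp_all [seq4]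
  · intro i h1 h2
    interval_cases i <;> simp [seq4, ha, hb, hc, hd]
  · intro i h1 h2
    have h2' : i ≤ 2 := by omega
    interval_cases i
    · refine ⟨?_, fun _ => ⟨fun h => ?_, fun h => ?_⟩⟩
      · simpa [seq4] using hT1
      · simpa [seq4] using imp1 (by simpa [seq4] using h)
      · simpa [seq4] using imp2 (by simpa [seq4] using h)
    · exact ⟨by simpa [seq4] using hT2, fun h => absurd h (by norm_num)⟩

set_option maxHeartbeats 1000000 in
/-- If `N` is a 3-connected matroid with no 4-element fan, `M` is a 3-connected matroid
having `N` as a minor, and `F` is a 4-element fan of `M`, then `|F ∩ E(N)| ≤ 3`. -/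
theorem statement17 {α : Type} (N M : Matroid α)
    (h3N : ThreeConnected N) (hNfan : ¬ ∃ y : ℕ → α, IsFan N 4 y)
    (hfin : M.E.Finite) (h3M : ThreeConnected M) (hNM : IsMinor N M)
    (y : ℕ → α) (hfan : IsFan M 4 y) :
    (({y 1, y 2, y 3, y 4} : Set α) ∩ N.E).encard ≤ 3 := by
  obtain ⟨-, hinj, hmem, hcond⟩ := hfan
  have hne : ∀ i j : ℕ, 1 ≤ i → i ≤ 4 → 1 ≤ j → j ≤ 4 → i ≠ j → y i ≠ y j := by
    intro i j hi1 hi4 hj1 hj4 hij h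
    exact hij (hinj (mem_Icc.2 ⟨hi1, hi4⟩) (mem_Icc.2 ⟨hj1, hj4⟩) h)
  by_contra hcon
  -- all four elements lie in N.E
  have hyN : ∀ i, 1 ≤ i → i ≤ 4 → y i ∈ N.E := by
    intro i h1 h2
    by_contra hni
    apply hcon
    interval_cases i
    · refine (encard_le_encard ?_).trans (encard3_le (y 2) (y 3) (y 4))
      rintro x ⟨hx4, hxN⟩
      simp only [mem_insert_iff, mem_singleton_iff] at hx4 ⊢
      rcases hx4 with rfl | rfl | rfl | rfl <;> tauto
    · refine (encard_le_encard ?_).trans (encard3_le (y 1) (y 3) (y 4))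
      rintro x ⟨hx4, hxN⟩
      simp only [mem_insert_iff, mem_singleton_iff] at hx4 ⊢
      rcases hx4 with rfl | rfl | rfl | rfl <;> tauto
    · refine (encard_le_encard ?_).trans (encard3_le (y 1) (y 2) (y 4))
      rintro x ⟨hx4, hxN⟩
      simp only [mem_insert_iff, mem_singleton_iff] at hx4 ⊢
      rcases hx4 with rfl | rfl | rfl | rfl <;> tauto
    · refine (encard_le_encard ?_).trans (encard3_le (y 1) (y 2) (y 3))
      rintro x ⟨hx4, hxN⟩
      simp only [mem_insert_iff, mem_singleton_iff] at hx4 ⊢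
      rcases hx4 with rfl | rfl | rfl | rfl <;> tauto
  have h1N := hyN 1 (by norm_num) (by norm_num)
  have h2N := hyN 2 (by norm_num) (by norm_num)
  have h3N' := hyN 3 (by norm_num) (by norm_num)
  have h4N := hyN 4 (by norm_num) (by norm_num)
  have h12 := hne 1 2 (by norm_num) (by norm_num) (by norm_num) (by norm_num) (by norm_num)
  have h13 := hne 1 3 (by norm_num) (by norm_num) (by norm_num) (by norm_num) (by norm_num)
  have h14 := hne 1 4 (by norm_num) (by norm_num) (by norm_num) (by norm_num) (by norm_num)
  have h23 := hne 2 3 (by norm_num) (by norm_num) (by norm_num) (by norm_num) (by norm_num)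
  have h24 := hne 2 4 (by norm_num) (by norm_num) (by norm_num) (by norm_num) (by norm_num)
  have h34 := hne 3 4 (by norm_num) (by norm_num) (by norm_num) (by norm_num) (by norm_num)
  have h4E : 4 ≤ N.E.encard := by
    have hcard : ({y 1, y 2, y 3, y 4} : Set α).encard = 4 := by
      rw [encard_insert_of_notMem (by simp [h12, h13, h14]),
        encard_insert_of_notMem (by simp [h23, h24]), encard_pair h34]
      norm_num
    rw [← hcard]
    exact encard_le_encard (by simp [insert_subset_iff, h1N, h2N, h3N', h4N])
  -- the triangle/triad structure in M
  have hc1 := hcond 1 le_rfl (by norm_num)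
  norm_num at hc1
  obtain ⟨hor, himp⟩ := hc1
  have hM : (IsTriangle M {y 1, y 2, y 3} ∧ IsTriad M {y 2, y 3, y 4}) ∨
      (IsTriad M {y 1, y 2, y 3} ∧ IsTriangle M {y 2, y 3, y 4}) := by
    rcases hor with h | h
    · exact Or.inl ⟨h, himp.1 h⟩
    · exact Or.inr ⟨h, himp.2 h⟩
  have e1 : ({y 4, y 3, y 2} : Set α) = {y 2, y 3, y 4} := by
    ext x; simp only [mem_insert_iff, mem_singleton_iff]; tauto
  have e2 : ({y 3, y 2, y 1} : Set α) = {y 1, y 2, y 3} := by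
    ext x; simp only [mem_insert_iff, mem_singleton_iff]; tauto
  apply hNfan
  rcases hM with ⟨hMt, hMd⟩ | ⟨hMd, hMt⟩
  · -- {y1,y2,y3} triangle of N, {y2,y3,y4} triad of N
    have hNT1 : IsTriangle N {y 1, y 2, y 3} :=
      triangle_minor hNM h3N h4E hMt h1N h2N h3N' h12 h13 h23
    have hNT2 : IsTriad N {y 2, y 3, y 4} :=
      triad_minor hNM h3N h4E hMd h2N h3N' h4N h23 h24 h34
    by_cases h1d : IsTriad N {y 1, y 2, y 3}
    · by_cases h2t : IsTriangle N {y 2, y 3, y 4}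
      · exact build_fan h12 h13 h14 h23 h24 h34 h1N h2N h3N' h4N
          (Or.inl hNT1) (Or.inr hNT2) (fun _ => hNT2) (fun _ => h2t)
      · refine build_fan h34.symm (Ne.symm h24) (Ne.symm h14) (Ne.symm h23)
          (Ne.symm h13) (Ne.symm h12) h4N h3N' h2N h1N
          (Or.inr (e1 ▸ hNT2)) (Or.inl (e2 ▸ hNT1)) ?_ ?_
        · intro h
          exact absurd (e1 ▸ h) h2t
        · intro _
          exact e2 ▸ hNT1
    · exact build_fan h12 h13 h14 h23 h24 h34 h1N h2N h3N' h4N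
        (Or.inl hNT1) (Or.inr hNT2) (fun _ => hNT2) (fun h => absurd h h1d)
  · -- {y1,y2,y3} triad of N, {y2,y3,y4} triangle of N
    have hNT1 : IsTriad N {y 1, y 2, y 3} :=
      triad_minor hNM h3N h4E hMd h1N h2N h3N' h12 h13 h23
    have hNT2 : IsTriangle N {y 2, y 3, y 4} :=
      triangle_minor hNM h3N h4E hMt h2N h3N' h4N h23 h24 h34
    by_cases h1t : IsTriangle N {y 1, y 2, y 3}
    · by_cases h2d : IsTriad N {y 2, y 3, y 4}
      · exact build_fan h12 h13 h14 h23 h24 h34 h1N h2N h3N' h4N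
          (Or.inl h1t) (Or.inl hNT2) (fun _ => h2d) (fun _ => hNT2)
      · refine build_fan h34.symm (Ne.symm h24) (Ne.symm h14) (Ne.symm h23)
          (Ne.symm h13) (Ne.symm h12) h4N h3N' h2N h1N
          (Or.inl (e1 ▸ hNT2)) (Or.inr (e2 ▸ hNT1)) ?_ ?_
        · intro _
          exact e2 ▸ hNT1
        · intro h
          exact absurd (e1 ▸ h) h2d
    · exact build_fan h12 h13 h14 h23 h24 h34 h1N h2N h3N' h4N
        (Or.inr hNT1) (Or.inl hNT2) (fun h => absurd h h1t) (fun _ => hNT2)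

end ExMinors
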